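/- Let a, b, K₁, K₂, K₃, K₄ be real numbers with a·K₃ ≠ b·K₄ and a ≠ b. Suppose (p₁, p₂, h, θ) and (p₁', p₂', h', θ') both solve the system a·cos θ − K₁ − K₄·p₁ = 0, a·sin θ + K₄·p₂ = −h, b·cos θ − K₂ − K₃·p₁ = 0, b·sin θ − K₃·p₂ = −h (with corresponding primed variables), both satisfy p₁² + p₂² = 1 and p₁'² + p₂'² = 1, both have p₂ < 0 and p₂' < 0, and both have θ, θ' ∈ (0, π). Then p₁ = p₁', p₂ = p₂', h = h' and θ = θ'. -/
import Mathlib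


theorem stmt_4 (a b K₁ K₂ K₃ K₄ : ℝ)
    (hne : a * K₃ ≠ b * K₄) (hab : a ≠ b)
    (p₁ p₂ h θ p₁' p₂' h' θ' : ℝ)
    (e1 : a * Real.cos θ - K₁ - K₄ * p₁ = 0)
    (e2 : a * Real.sin θ + K₄ * p₂ = -h)
    (e3 : b * Real.cos θ - K₂ - K₃ * p₁ = 0)
    (e4 : b * Real.sin θ - K₃ * p₂ = -h)
    (e1' : a * Real.cos θ' - K₁ - K₄ * p₁' = 0)
    (e2' : a * Real.sin θ' + K₄ * p₂' = -h')
    (e3' : b * Real.cos θ' - K₂ - K₃ * p₁' = 0)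
    (e4' : b * Real.sin θ' - K₃ * p₂' = -h')
    (hn : p₁ ^ 2 + p₂ ^ 2 = 1) (hn' : p₁' ^ 2 + p₂' ^ 2 = 1)
    (hp2 : p₂ < 0) (hp2' : p₂' < 0)
    (hθ : θ ∈ Set.Ioo 0 Real.pi) (hθ' : θ' ∈ Set.Ioo 0 Real.pi) :
    p₁ = p₁' ∧ p₂ = p₂' ∧ h = h' ∧ θ = θ' := by
  have hD : a * K₃ - b * K₄ ≠ 0 := sub_ne_zero.mpr hne
  have key : (a * K₃ - b * K₄) * Real.cos θ = K₁ * K₃ - K₂ * K₄ := by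
    linear_combination K₃ * e1 - K₄ * e3
  have key' : (a * K₃ - b * K₄) * Real.cos θ' = K₁ * K₃ - K₂ * K₄ := by
    linear_combination K₃ * e1' - K₄ * e3'
  have hc : Real.cos θ = Real.cos θ' := mul_left_cancel₀ hD (key.trans key'.symm)
  have hθeq : θ = θ' :=
    Real.injOn_cos ⟨le_of_lt hθ.1, le_of_lt hθ.2⟩ ⟨le_of_lt hθ'.1, le_of_lt hθ'.2⟩ hc
  subst hθeq
  have hsum : K₃ + K₄ ≠ 0 := by
    intro h0
    have hs : Real.sin θ > 0 := Real.sin_pos_of_pos_of_lt_pi hθ.1 hθ.2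
    have : (a - b) * Real.sin θ = 0 := by linear_combination e2 - e4 - p₂ * h0
    rcases mul_eq_zero.mp this with h1 | h1
    · exact hab (sub_eq_zero.mp h1)
    · exact hs.ne' h1
  have hp2eq : p₂ = p₂' := by
    have : (K₃ + K₄) * p₂ = (K₃ + K₄) * p₂' := by linear_combination e2 - e4 - e2' + e4'
    exact mul_left_cancel₀ hsum this
  have hp1eq : p₁ = p₁' := by
    by_cases hK4 : K₄ = 0
    · have hK3 : K₃ ≠ 0 := by
        intro h0; exact hne (by rw [hK4, h0]; ring)
      have : K₃ * p₁ = K₃ * p₁' := by linear_combination e3' - e3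
      exact mul_left_cancel₀ hK3 this
    · have : K₄ * p₁ = K₄ * p₁' := by linear_combination e1' - e1
      exact mul_left_cancel₀ hK4 this
  have hheq : h = h' := by linear_combination e2 - e2' - K₄ * hp2eq
  exact ⟨hp1eq, hp2eq, hheq, rfl⟩
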